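/- Factorization criterion: let ρ = Σ_i λ_i ρ_i^I⊗ρ_i^{II} be a separable invertible density matrix on H1⊗H2 (dim H1 = n, dim H2 = m), {φ_k} any orthonormal basis of H1, {ϕ_j} an orthonormal basis of H2 diagonalizing Tr_1ρ. Then Tr(ρ E(F⊗1)·(1⊗G)) = Σ_i λ_i Tr(ρ_i^I F)·Tr(ρ_i^{II} G) for all F ∈ B(H1), G ∈ B(H2) if and only if for all k,l ∈ {1,…,n}, j,i ∈ {1,…,m}: ρ_{lkji} = Σ_{p,q} (ρ^{1/2})_{pkjq}(ρ^{1/2})_{lpqi} √(Σ_r ρ_{rrjj} / Σ_v ρ_{vvii}). -/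

import Mathlib

open Matrix Kronecker
open scoped ComplexOrder

/-- Partial trace over the first tensor factor. -/
noncomputable def ptrace1 {n m : ℕ} (M : Matrix (Fin n × Fin m) (Fin n × Fin m) ℂ) :
    Matrix (Fin m) (Fin m) ℂ :=
  fun j i => ∑ k : Fin n, M (k, j) (k, i)

/-- Tensor product of vectors. -/
noncomputable def vecTens {n m : ℕ} (x : Fin n → ℂ) (y : Fin m → ℂ) : Fin n × Fin m → ℂ :=
  fun p => x p.1 * y p.2

/-- Rank-one operator `|y⟩⟨z|`. -/
noncomputable def ketbra {d : Type*} (y z : d → ℂ) : Matrix d d ℂ :=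
  fun a b => y a * star (z b)

/-- `γ = ρ^{1/2} (1 ⊗ (Tr₁ρ))^{-1/2}`, given `s = ρ^{1/2}` and `w = (Tr₁ρ)^{-1/2}`. -/
noncomputable def gammaOp {n m : ℕ} (s : Matrix (Fin n × Fin m) (Fin n × Fin m) ℂ)
    (w : Matrix (Fin m) (Fin m) ℂ) : Matrix (Fin n × Fin m) (Fin n × Fin m) ℂ :=
  s * ((1 : Matrix (Fin n) (Fin n) ℂ) ⊗ₖ w)

/-- The generalized conditional expectation `E(A) = 1 ⊗ Tr₁(γ* A γ)`. -/
noncomputable def Emap {n m : ℕ} (s : Matrix (Fin n × Fin m) (Fin n × Fin m) ℂ)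
    (w : Matrix (Fin m) (Fin m) ℂ) (A : Matrix (Fin n × Fin m) (Fin n × Fin m) ℂ) :
    Matrix (Fin n × Fin m) (Fin n × Fin m) ℂ :=
  (1 : Matrix (Fin n) (Fin n) ℂ) ⊗ₖ ptrace1 ((gammaOp s w)ᴴ * A * gammaOp s w)

/-- Matrix element `⟨φ_p⊗ϕ_r | M | φ_q⊗ϕ_s⟩` in a product basis. -/
noncomputable def mel {n m : ℕ} (φ : Fin n → Fin n → ℂ) (ϕ : Fin m → Fin m → ℂ)
    (M : Matrix (Fin n × Fin m) (Fin n × Fin m) ℂ) (p q : Fin n) (r s : Fin m) : ℂ :=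
  star (vecTens (φ p) (ϕ r)) ⬝ᵥ M.mulVec (vecTens (φ q) (ϕ s))

/-! ### Auxiliary lemmas -/

section Aux

lemma sum_swap {α γ : Type*} [Fintype α] [Fintype γ] (f : γ → α → ℂ) :
    (∑ x : γ, ∑ y : α, f x y) = ∑ y : α, ∑ x : γ, f x y := Finset.sum_comm

lemma dot_sum {d ι : Type*} [Fintype d] [Fintype ι] (v : d → ℂ) (f : ι → d → ℂ) :
    v ⬝ᵥ (∑ i, f i) = ∑ i, v ⬝ᵥ f i := by
  simp only [dotProduct, Finset.sum_apply, Finset.mul_sum]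
  exact Finset.sum_comm

lemma sum_mulVec {d ι : Type*} [Fintype d] [Fintype ι] (M : ι → Matrix d d ℂ) (v : d → ℂ) :
    (∑ i, M i).mulVec v = ∑ i, (M i).mulVec v := by
  funext a
  simp only [Matrix.mulVec, dotProduct, Finset.sum_apply, Matrix.sum_apply,
    Finset.sum_mul]
  exact Finset.sum_comm

lemma sum_kron {n m ι : Type*} [Fintype n] [Fintype m] [Fintype ι]
    (A : ι → Matrix n n ℂ) (B : Matrix m m ℂ) :
    (∑ i, A i) ⊗ₖ B = ∑ i, (A i) ⊗ₖ B := by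
  ext p q
  simp [kroneckerMap_apply, Matrix.sum_apply, Finset.sum_mul]

lemma ketbra_mulVec {d : Type*} [Fintype d] (y z v : d → ℂ) :
    (ketbra y z).mulVec v = (star z ⬝ᵥ v) • y := by
  funext a
  simp only [ketbra, Matrix.mulVec, dotProduct, Pi.smul_apply, smul_eq_mul,
    Pi.star_apply, Finset.sum_mul]
  exact Finset.sum_congr rfl fun b _ => by ring

lemma dot_ketbra {d : Type*} [Fintype d] (u y z v : d → ℂ) :
    star u ⬝ᵥ (ketbra y z).mulVec v = (star u ⬝ᵥ y) * (star z ⬝ᵥ v) := by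
  rw [ketbra_mulVec, dotProduct_smul, smul_eq_mul]; ring

lemma trace_mul_ketbra {d : Type*} [Fintype d] [DecidableEq d] (A : Matrix d d ℂ) (y z : d → ℂ) :
    (A * ketbra y z).trace = star z ⬝ᵥ A.mulVec y := by
  simp only [Matrix.trace, Matrix.diag, Matrix.mul_apply, ketbra, dotProduct,
    Matrix.mulVec, Pi.star_apply, Finset.mul_sum]
  apply Finset.sum_congr rfl; intro a _
  apply Finset.sum_congr rfl; intro b _; ring

lemma star_dot_conjTranspose_mulVec {d : Type*} [Fintype d] (A : Matrix d d ℂ) (x z : d → ℂ) :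
    star x ⬝ᵥ Aᴴ.mulVec z = star (A.mulVec x) ⬝ᵥ z := by
  simp only [dotProduct, Matrix.mulVec, Matrix.conjTranspose_apply, Pi.star_apply,
    Finset.mul_sum, Finset.sum_mul, star_sum, star_mul']
  rw [Finset.sum_comm]
  apply Finset.sum_congr rfl; intro a _
  apply Finset.sum_congr rfl; intro b _; ring

lemma star_dot_comm {d : Type*} [Fintype d] (x y : d → ℂ) :
    star x ⬝ᵥ y = star (star y ⬝ᵥ x) := by
  simp only [dotProduct, star_sum, star_mul', Pi.star_apply, star_star]
  apply Finset.sum_congr rfl; intro a _; ring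

lemma herm_dot {d : Type*} [Fintype d] (P : Matrix d d ℂ) (hP : P.IsHermitian)
    (v z : d → ℂ) (a : ℝ) (hv : P.mulVec v = ((a : ℝ) : ℂ) • v) :
    star v ⬝ᵥ P.mulVec z = ((a : ℝ) : ℂ) * (star v ⬝ᵥ z) := by
  conv_lhs => rw [← hP.eq]
  rw [star_dot_conjTranspose_mulVec, hv, star_smul, smul_dotProduct]
  simp [Complex.star_def, Complex.conj_ofReal]

lemma complete {n : ℕ} (φ : Fin n → Fin n → ℂ)
    (hφ : ∀ i j, (∑ k, star (φ i k) * φ j k) = if i = j then 1 else 0) :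
    ∀ a c, (∑ r, star (φ r a) * φ r c) = if a = c then 1 else 0 := by
  set U : Matrix (Fin n) (Fin n) ℂ := Matrix.of φ with hU
  have h1 : U * Uᴴ = 1 := by
    ext i j
    have h2 : (∑ k, φ i k * star (φ j k)) = star (∑ k, star (φ i k) * φ j k) := by
      simp only [star_sum, star_mul', star_star]
    simp only [Matrix.mul_apply, Matrix.conjTranspose_apply, Matrix.one_apply, hU,
      Matrix.of_apply]
    rw [h2, hφ i j]
    split <;> simp
  have h2 : Uᴴ * U = 1 := mul_eq_one_comm.mp h1
  intro a c
  have := congrArg (fun M => M a c) h2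
  simp only [Matrix.mul_apply, Matrix.conjTranspose_apply, Matrix.one_apply, hU,
    Matrix.of_apply] at this
  simpa using this

lemma complete' {n : ℕ} (φ : Fin n → Fin n → ℂ)
    (hφ : ∀ i j, (∑ k, star (φ i k) * φ j k) = if i = j then 1 else 0) :
    ∀ a c, (∑ r, φ r a * star (φ r c)) = if a = c then 1 else 0 := by
  intro a c
  have h2 : (∑ r, φ r a * star (φ r c)) = star (∑ r, star (φ r a) * φ r c) := by
    simp only [star_sum, star_mul', star_star]
  rw [h2, complete φ hφ a c]
  split <;> simp

lemma quad_sum {α β γ δ : Type*} [Fintype α] [Fintype β] [Fintype γ] [Fintype δ]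
    (A : α → β → ℂ) (B : γ → δ → ℂ) (F : β → δ → ℂ) :
    (∑ k, ∑ l, ∑ b, ∑ d, A k b * (B l d * F b d))
      = ∑ b, ∑ d, (∑ k, A k b) * ((∑ l, B l d) * F b d) := by
  have h1 : ∀ k, (∑ l, ∑ b, ∑ d, A k b * (B l d * F b d))
      = ∑ b, A k b * (∑ d, (∑ l, B l d) * F b d) := by
    intro k
    rw [Finset.sum_comm]
    refine Finset.sum_congr rfl fun b _ => ?_
    simp only [← Finset.mul_sum]
    congr 1
    rw [Finset.sum_comm]
    refine Finset.sum_congr rfl fun d _ => ?_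
    rw [Finset.sum_mul]
  simp only [h1]
  rw [Finset.sum_comm]
  refine Finset.sum_congr rfl fun b _ => ?_
  rw [← Finset.sum_mul, Finset.mul_sum]

lemma expand_matrix {n : ℕ} (φ : Fin n → Fin n → ℂ)
    (hφ : ∀ i j, (∑ k, star (φ i k) * φ j k) = if i = j then 1 else 0)
    (F : Matrix (Fin n) (Fin n) ℂ) :
    F = ∑ k, ∑ l, (star (φ k) ⬝ᵥ F.mulVec (φ l)) • ketbra (φ k) (φ l) := by
  ext a c
  simp only [Matrix.sum_apply, Matrix.smul_apply, smul_eq_mul, ketbra, dotProduct,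
    Matrix.mulVec, Pi.star_apply]
  have key : ∀ k l : Fin n, ((∑ b, star (φ k b) * ∑ d, F b d * φ l d) * (φ k a * star (φ l c)))
      = ∑ b, ∑ d, (star (φ k b) * φ k a) * ((φ l d * star (φ l c)) * F b d) := by
    intro k l
    rw [Finset.sum_mul]
    refine Finset.sum_congr rfl fun b _ => ?_
    rw [Finset.mul_sum, Finset.sum_mul]
    refine Finset.sum_congr rfl fun d _ => ?_; ring
  simp only [key]
  rw [quad_sum (fun k b => star (φ k b) * φ k a) (fun l d => φ l d * star (φ l c))
    (fun b d => F b d)]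
  simp only [complete φ hφ, complete' φ hφ]
  simp [Finset.sum_ite_eq, ite_mul, one_mul, zero_mul]

lemma w_eig {m : ℕ} (w P : Matrix (Fin m) (Fin m) ℂ) (hw : w.PosSemidef)
    (hww : w * w * P = 1) (a : ℝ) (ha : 0 < a) (v : Fin m → ℂ)
    (heig : P.mulVec v = (a : ℂ) • v) :
    w.mulVec v = (((Real.sqrt a)⁻¹ : ℝ) : ℂ) • v := by
  set c : ℝ := (Real.sqrt a)⁻¹ with hc
  have hcpos : 0 < c := by positivity
  have hc2 : c * c * a = 1 := by
    rw [hc, ← mul_inv, Real.mul_self_sqrt ha.le]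
    field_simp
  have h1 : (a : ℂ) • (w * w).mulVec v = v := by
    have h := congrArg (fun M => M.mulVec v) hww
    simp only [← Matrix.mulVec_mulVec, heig, Matrix.one_mulVec] at h
    simpa [Matrix.mulVec_smul] using h
  have h2 : (w * w).mulVec v = ((c * c : ℝ) : ℂ) • v := by
    have ha' : (a : ℂ) ≠ 0 := by exact_mod_cast ha.ne'
    have : (a : ℂ) • (w * w).mulVec v = (a : ℂ) • (((c * c : ℝ) : ℂ) • v) := by
      rw [h1, smul_smul]
      have : (a : ℂ) * ((c * c : ℝ) : ℂ) = 1 := by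
        push_cast
        have : (a : ℂ) * (c * c) = ((c * c * a : ℝ) : ℂ) := by push_cast; ring
        rw [this, hc2]; simp
      rw [this, one_smul]
    exact smul_right_injective _ ha' this
  set u : Fin m → ℂ := w.mulVec v - (c : ℂ) • v with hu
  have key : w.mulVec u + (c : ℂ) • u = 0 := by
    rw [hu]
    have : w.mulVec (w.mulVec v - (c : ℂ) • v) = (w * w).mulVec v - (c : ℂ) • w.mulVec v := by
      rw [Matrix.mulVec_sub, Matrix.mulVec_smul, Matrix.mulVec_mulVec]
    rw [this, h2, smul_sub]
    push_cast
    module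
  have hz : u = 0 := by
    have hq : star u ⬝ᵥ w.mulVec u + (c : ℂ) * (star u ⬝ᵥ u) = 0 := by
      have := congrArg (fun x => star u ⬝ᵥ x) key
      simpa [dotProduct_add, dotProduct_smul, smul_eq_mul] using this
    have hs : 0 ≤ star u ⬝ᵥ w.mulVec u := hw.dotProduct_mulVec_nonneg u
    have ht : 0 ≤ star u ⬝ᵥ u := dotProduct_star_self_nonneg u
    have htz : star u ⬝ᵥ u = 0 := by
      set sq := star u ⬝ᵥ w.mulVec u
      set tq := star u ⬝ᵥ u
      have hre : sq.re + c * tq.re = 0 := by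
        have := congrArg Complex.re hq
        simpa [Complex.add_re, Complex.mul_re, Complex.ofReal_re, Complex.ofReal_im] using this
      have h1 : 0 ≤ sq.re := (Complex.le_def.mp hs).1
      have h2 : 0 ≤ tq.re := (Complex.le_def.mp ht).1
      have h3 : tq.im = 0 := ((Complex.le_def.mp ht).2).symm
      have : tq.re = 0 := by nlinarith
      exact Complex.ext (by simpa using this) (by simpa using h3)
    exact (dotProduct_star_self_eq_zero).mp htz
  exact sub_eq_zero.mp (hu ▸ hz)

lemma trace_mul_one_kron {n m : ℕ} (ρ : Matrix (Fin n × Fin m) (Fin n × Fin m) ℂ)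
    (M : Matrix (Fin m) (Fin m) ℂ) :
    (ρ * ((1 : Matrix (Fin n) (Fin n) ℂ) ⊗ₖ M)).trace = (ptrace1 ρ * M).trace := by
  simp only [Matrix.trace, Matrix.diag, Matrix.mul_apply, ptrace1, kroneckerMap_apply,
    Fintype.sum_prod_type, Matrix.one_apply, ite_mul, one_mul, zero_mul, mul_ite, mul_zero,
    Finset.sum_ite_eq, Finset.mem_univ, if_true, Finset.sum_ite_eq', Finset.sum_mul]
  have h : ∀ (k : Fin n) (j : Fin m),
      (∑ p : Fin n, ∑ q : Fin m, if p = k then ρ (k, j) (p, q) * M q j else 0)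
        = ∑ q : Fin m, ρ (k, j) (k, q) * M q j := by
    intro k j
    rw [Finset.sum_comm]
    simp
  simp only [h]
  rw [Finset.sum_comm]
  exact Finset.sum_congr rfl fun j _ => sum_swap _

lemma ptrace1_exp {n m : ℕ} (φ : Fin n → Fin n → ℂ)
    (hc : ∀ a c, (∑ r, star (φ r a) * φ r c) = if a = c then 1 else 0)
    (B : Matrix (Fin n × Fin m) (Fin n × Fin m) ℂ) (x y : Fin m → ℂ) :
    (∑ r, star (vecTens (φ r) x) ⬝ᵥ B.mulVec (vecTens (φ r) y))
      = star x ⬝ᵥ (ptrace1 B).mulVec y := by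
  simp only [dotProduct, Matrix.mulVec, vecTens, ptrace1, Pi.star_apply,
    Fintype.sum_prod_type, star_mul', Finset.sum_mul, Finset.mul_sum]
  refine Eq.trans (b := ∑ a : Fin n, ∑ b : Fin m, ∑ c : Fin n, ∑ d : Fin m,
      (∑ r, star (φ r a) * φ r c) * (star (x b) * (B (a, b) (c, d) * y d))) ?_ ?_
  · rw [sum_swap (fun r a => ∑ b : Fin m, ∑ c : Fin n, ∑ d : Fin m,
      star (φ r a) * star (x b) * (B (a, b) (c, d) * (φ r c * y d)))]
    refine Finset.sum_congr rfl fun a _ => ?_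
    rw [sum_swap (fun r b => ∑ c : Fin n, ∑ d : Fin m,
      star (φ r a) * star (x b) * (B (a, b) (c, d) * (φ r c * y d)))]
    refine Finset.sum_congr rfl fun b _ => ?_
    rw [sum_swap (fun r c => ∑ d : Fin m,
      star (φ r a) * star (x b) * (B (a, b) (c, d) * (φ r c * y d)))]
    refine Finset.sum_congr rfl fun c _ => ?_
    rw [sum_swap (fun r d => star (φ r a) * star (x b) * (B (a, b) (c, d) * (φ r c * y d)))]
    refine Finset.sum_congr rfl fun d _ => ?_
    rw [Finset.sum_mul]
    refine Finset.sum_congr rfl fun r _ => ?_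
    ring
  · simp only [hc, ite_mul, one_mul, zero_mul]
    refine Eq.trans (b := ∑ a : Fin n, ∑ b : Fin m, ∑ d : Fin m,
        star (x b) * (B (a, b) (a, d) * y d)) ?_ ?_
    · refine Finset.sum_congr rfl fun a _ => ?_
      refine Finset.sum_congr rfl fun b _ => ?_
      rw [sum_swap (fun c d => if a = c then star (x b) * (B (a, b) (c, d) * y d) else 0)]
      refine Finset.sum_congr rfl fun d _ => ?_
      simp
    · rw [sum_swap (fun a b => ∑ d : Fin m, star (x b) * (B (a, b) (a, d) * y d))]
      refine Finset.sum_congr rfl fun b _ => ?_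
      exact sum_swap _

lemma ptrace1_herm {n m : ℕ} (ρ : Matrix (Fin n × Fin m) (Fin n × Fin m) ℂ)
    (h : ρ.IsHermitian) : (ptrace1 ρ).IsHermitian := by
  ext j i
  simp only [Matrix.conjTranspose_apply, ptrace1, star_sum]
  refine Finset.sum_congr rfl fun k _ => ?_
  have := congrFun (congrFun h.eq (k, j)) (k, i)
  rw [Matrix.conjTranspose_apply] at this
  exact this

lemma mel_star {n m : ℕ} (φ : Fin n → Fin n → ℂ) (ϕ : Fin m → Fin m → ℂ)
    (M : Matrix (Fin n × Fin m) (Fin n × Fin m) ℂ) (hM : M.IsHermitian)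
    (p q : Fin n) (r t : Fin m) :
    star (mel φ ϕ M p q r t) = mel φ ϕ M q p t r := by
  unfold mel
  conv_rhs => rw [← hM.eq]
  rw [star_dot_conjTranspose_mulVec]
  rw [star_dot_comm (vecTens (φ p) (ϕ r)) (M.mulVec (vecTens (φ q) (ϕ t))), star_star]

lemma kron_mulVec {n m : ℕ} (A : Matrix (Fin n) (Fin n) ℂ) (B : Matrix (Fin m) (Fin m) ℂ)
    (x : Fin n → ℂ) (y : Fin m → ℂ) :
    (A ⊗ₖ B).mulVec (vecTens x y) = vecTens (A.mulVec x) (B.mulVec y) := by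
  funext p
  obtain ⟨a, b⟩ := p
  simp only [Matrix.mulVec, dotProduct, vecTens, Fintype.sum_prod_type,
    kroneckerMap_apply]
  rw [Finset.sum_mul_sum]
  apply Finset.sum_congr rfl; intro c _; apply Finset.sum_congr rfl; intro d _; ring

lemma kron_sum {n m ι : Type*} [Fintype n] [Fintype m] [Fintype ι]
    (A : Matrix n n ℂ) (B : ι → Matrix m m ℂ) :
    A ⊗ₖ (∑ i, B i) = ∑ i, A ⊗ₖ (B i) := by
  ext p q
  simp [kroneckerMap_apply, Matrix.sum_apply, Finset.mul_sum]

lemma sum_swap4 {α β γ δ : Type*} [Fintype α] [Fintype β] [Fintype γ] [Fintype δ]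
    (f : α → β → γ → δ → ℂ) :
    (∑ a, ∑ b, ∑ c, ∑ d, f a b c d) = ∑ c, ∑ d, ∑ a, ∑ b, f a b c d := by
  have h1 : ∀ a, (∑ b, ∑ c, ∑ d, f a b c d) = ∑ c, ∑ d, ∑ b, f a b c d := by
    intro a
    rw [sum_swap (fun b c => ∑ d, f a b c d)]
    exact Finset.sum_congr rfl fun c _ => sum_swap _
  simp only [h1]
  rw [sum_swap (fun a c => ∑ d, ∑ b, f a b c d)]
  exact Finset.sum_congr rfl fun c _ => sum_swap _

end Aux

/-- factorization criterion. For a separable invertible density matrix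
`ρ = Σ λᵢ ρᵢᴵ⊗ρᵢᴵᴵ`, the correlation function factorizes for all `F, G` iff the matrix
elements of `ρ` and `ρ^{1/2}` satisfy the relation (ii) of Proposition 2. -/
theorem factorization_criterion {n m N : ℕ}
    (ρ s : Matrix (Fin n × Fin m) (Fin n × Fin m) ℂ) (w : Matrix (Fin m) (Fin m) ℂ)
    (lam : Fin N → ℝ) (hlpos : ∀ i, 0 < lam i) (hlsum : ∑ i, lam i = 1)
    (ρI : Fin N → Matrix (Fin n) (Fin n) ℂ)
    (hρI : ∀ i, (ρI i).PosSemidef ∧ (ρI i).trace = 1)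
    (ρII : Fin N → Matrix (Fin m) (Fin m) ℂ)
    (hρII : ∀ i, (ρII i).PosSemidef ∧ (ρII i).trace = 1)
    (hdec : ρ = ∑ i, ((lam i : ℝ) : ℂ) • (ρI i ⊗ₖ ρII i))
    (hρ : ρ.PosDef) (htr : ρ.trace = 1)
    (hs : s.PosSemidef) (hss : s * s = ρ)
    (hw : w.PosSemidef) (hww : w * w * ptrace1 ρ = 1)
    (φ : Fin n → Fin n → ℂ)
    (hφ : ∀ i j, (∑ k, star (φ i k) * φ j k) = if i = j then 1 else 0)
    (ϕ : Fin m → Fin m → ℂ)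
    (hϕ : ∀ i j, (∑ k, star (ϕ i k) * ϕ j k) = if i = j then 1 else 0)
    (am : Fin m → ℝ) (hapos : ∀ j, 0 < am j)
    (heig : ∀ j, (ptrace1 ρ).mulVec (ϕ j) = ((am j : ℝ) : ℂ) • ϕ j)
    (haval : ∀ j, ((am j : ℝ) : ℂ) = ∑ r : Fin n, mel φ ϕ ρ r r j j) :
    ((∀ (F : Matrix (Fin n) (Fin n) ℂ) (G : Matrix (Fin m) (Fin m) ℂ),
        (ρ * Emap s w (F ⊗ₖ (1 : Matrix (Fin m) (Fin m) ℂ)) *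
            ((1 : Matrix (Fin n) (Fin n) ℂ) ⊗ₖ G)).trace =
          ∑ i, ((lam i : ℝ) : ℂ) * (ρI i * F).trace * (ρII i * G).trace) ↔
      (∀ (k l : Fin n) (j i : Fin m),
        mel φ ϕ ρ l k j i =
          ∑ p : Fin n, ∑ q : Fin m,
            mel φ ϕ s p k j q * mel φ ϕ s l p q i *
              ((Real.sqrt (am j / am i) : ℝ) : ℂ))) := by
  classical
  have hcφ := complete φ hφ
  have hcϕ' := complete' ϕ hϕ
  have hsH : s.IsHermitian := hs.1
  have hPH : (ptrace1 ρ).IsHermitian := ptrace1_herm ρ hρ.1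
  set b : Fin m → ℝ := fun j => (Real.sqrt (am j))⁻¹ with hb
  have hwϕ : ∀ j, w.mulVec (ϕ j) = ((b j : ℝ) : ℂ) • ϕ j := fun j =>
    w_eig w (ptrace1 ρ) hw hww (am j) (hapos j) (ϕ j) (heig j)
  have hγ : ∀ (r : Fin n) (j : Fin m),
      (gammaOp s w).mulVec (vecTens (φ r) (ϕ j))
        = ((b j : ℝ) : ℂ) • s.mulVec (vecTens (φ r) (ϕ j)) := by
    intro r j
    unfold gammaOp
    rw [← Matrix.mulVec_mulVec, kron_mulVec, Matrix.one_mulVec, hwϕ j]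
    have : vecTens (φ r) (((b j : ℝ) : ℂ) • ϕ j) = ((b j : ℝ) : ℂ) • vecTens (φ r) (ϕ j) := by
      funext p; simp [vecTens]; ring
    rw [this, Matrix.mulVec_smul]
  have hmid : ∀ (F : Matrix (Fin n) (Fin n) ℂ) (u v : Fin n × Fin m → ℂ),
      star u ⬝ᵥ (F ⊗ₖ (1 : Matrix (Fin m) (Fin m) ℂ)).mulVec v
        = ∑ k, ∑ l, (star (φ k) ⬝ᵥ F.mulVec (φ l)) *
            ∑ q, (star u ⬝ᵥ vecTens (φ k) (ϕ q)) * (star (vecTens (φ l) (ϕ q)) ⬝ᵥ v) := by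
    intro F u v
    conv_lhs => rw [expand_matrix φ hφ F]
    rw [sum_kron, _root_.sum_mulVec, dot_sum]
    refine Finset.sum_congr rfl fun k _ => ?_
    rw [sum_kron, _root_.sum_mulVec, dot_sum]
    refine Finset.sum_congr rfl fun l _ => ?_
    rw [Matrix.smul_kronecker, Matrix.smul_mulVec, dotProduct_smul, smul_eq_mul]
    congr 1
    have kb1 : (ketbra (φ k) (φ l)) ⊗ₖ (1 : Matrix (Fin m) (Fin m) ℂ)
        = ∑ q, ketbra (vecTens (φ k) (ϕ q)) (vecTens (φ l) (ϕ q)) := by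
      ext ⟨a, b'⟩ ⟨c, d⟩
      simp only [kroneckerMap_apply, ketbra, Matrix.one_apply, Matrix.sum_apply, vecTens,
        star_mul']
      have hq : ∀ q : Fin m, φ k a * ϕ q b' * (star (φ l c) * star (ϕ q d))
          = (φ k a * star (φ l c)) * (ϕ q b' * star (ϕ q d)) := fun q => by ring
      rw [Finset.sum_congr rfl fun q _ => hq q, ← Finset.mul_sum, hcϕ' b' d]
    rw [kb1, _root_.sum_mulVec, dot_sum]
    exact Finset.sum_congr rfl fun q _ => dot_ketbra _ _ _ _
  have hmelB : ∀ (F : Matrix (Fin n) (Fin n) ℂ) (r : Fin n) (i j : Fin m),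
      mel φ ϕ ((gammaOp s w)ᴴ * (F ⊗ₖ (1 : Matrix (Fin m) (Fin m) ℂ)) * gammaOp s w) r r i j
        = ((b i : ℝ) : ℂ) * ((b j : ℝ) : ℂ) *
            ∑ k, ∑ l, (star (φ k) ⬝ᵥ F.mulVec (φ l)) *
              ∑ q, mel φ ϕ s r k i q * mel φ ϕ s l r q j := by
    intro F r i j
    unfold mel
    rw [← Matrix.mulVec_mulVec, ← Matrix.mulVec_mulVec, star_dot_conjTranspose_mulVec,
      hγ r i, hγ r j, Matrix.mulVec_smul, star_smul, smul_dotProduct,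
      dotProduct_smul]
    simp only [smul_eq_mul, Complex.star_def, Complex.conj_ofReal]
    rw [hmid F (s.mulVec (vecTens (φ r) (ϕ i))) (s.mulVec (vecTens (φ r) (ϕ j)))]
    have h1 : ∀ (k : Fin n) (q : Fin m),
        star (s.mulVec (vecTens (φ r) (ϕ i))) ⬝ᵥ vecTens (φ k) (ϕ q) = mel φ ϕ s r k i q := by
      intro k q
      rw [star_dot_comm (s.mulVec (vecTens (φ r) (ϕ i))) (vecTens (φ k) (ϕ q))]
      exact (congrArg star rfl).trans (mel_star φ ϕ s hsH k r q i)
    have h2 : ∀ (l : Fin n) (q : Fin m),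
        star (vecTens (φ l) (ϕ q)) ⬝ᵥ s.mulVec (vecTens (φ r) (ϕ j)) = mel φ ϕ s l r q j :=
      fun _ _ => rfl
    simp only [h1, h2]
    simp only [mel]
    ring
  have K1 : ∀ (F : Matrix (Fin n) (Fin n) ℂ) (G : Matrix (Fin m) (Fin m) ℂ),
      (ρ * Emap s w (F ⊗ₖ (1 : Matrix (Fin m) (Fin m) ℂ)) *
          ((1 : Matrix (Fin n) (Fin n) ℂ) ⊗ₖ G)).trace
        = ∑ j, ∑ i, (star (ϕ j) ⬝ᵥ G.mulVec (ϕ i)) *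
            (((am i : ℝ) : ℂ) * ((b i : ℝ) : ℂ) * ((b j : ℝ) : ℂ) *
              ∑ r, ∑ k, ∑ l, (star (φ k) ⬝ᵥ F.mulVec (φ l)) *
                ∑ q, mel φ ϕ s r k i q * mel φ ϕ s l r q j) := by
    intro F G
    set B := (gammaOp s w)ᴴ * (F ⊗ₖ (1 : Matrix (Fin m) (Fin m) ℂ)) * gammaOp s w with hB
    have e1 : ρ * Emap s w (F ⊗ₖ (1 : Matrix (Fin m) (Fin m) ℂ)) *
        ((1 : Matrix (Fin n) (Fin n) ℂ) ⊗ₖ G) = ρ * ((1 : Matrix (Fin n) (Fin n) ℂ) ⊗ₖ (ptrace1 B * G)) := by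
      rw [mul_assoc]
      congr 1
      show ((1 : Matrix (Fin n) (Fin n) ℂ) ⊗ₖ ptrace1 B) * ((1 : Matrix (Fin n) (Fin n) ℂ) ⊗ₖ G) = _
      have h := Matrix.mul_kronecker_mul (1 : Matrix (Fin n) (Fin n) ℂ)
        (1 : Matrix (Fin n) (Fin n) ℂ) (ptrace1 B) G
      rw [one_mul] at h
      exact h.symm
    rw [e1, trace_mul_one_kron]
    conv_lhs => rw [expand_matrix ϕ hϕ G]
    simp only [Matrix.mul_sum, Matrix.mul_smul, Matrix.trace_sum, Matrix.trace_smul,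
      smul_eq_mul]
    refine Finset.sum_congr rfl fun j _ => Finset.sum_congr rfl fun i _ => ?_
    congr 1
    rw [← mul_assoc, trace_mul_ketbra, ← Matrix.mulVec_mulVec]
    rw [herm_dot (ptrace1 ρ) hPH (ϕ i) _ (am i) (heig i)]
    rw [← ptrace1_exp φ hcφ B (ϕ i) (ϕ j)]
    have hr : ∀ r : Fin n, star (vecTens (φ r) (ϕ i)) ⬝ᵥ B.mulVec (vecTens (φ r) (ϕ j))
        = mel φ ϕ B r r i j := fun r => rfl
    simp only [hr]
    simp only [hB, hmelB F]
    rw [← Finset.mul_sum]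
    ring
  have hketk : ∀ (k l : Fin n) (j i : Fin m),
      (ketbra (φ k) (φ l)) ⊗ₖ (ketbra (ϕ j) (ϕ i))
        = ketbra (vecTens (φ k) (ϕ j)) (vecTens (φ l) (ϕ i)) := by
    intro k l j i
    ext ⟨a, b'⟩ ⟨c, d⟩
    simp only [kroneckerMap_apply, ketbra, vecTens, star_mul']
    ring
  have K2 : ∀ (F : Matrix (Fin n) (Fin n) ℂ) (G : Matrix (Fin m) (Fin m) ℂ),
      (ρ * (F ⊗ₖ G)).trace
        = ∑ j, ∑ i, (star (ϕ j) ⬝ᵥ G.mulVec (ϕ i)) *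
            ∑ k, ∑ l, (star (φ k) ⬝ᵥ F.mulVec (φ l)) * mel φ ϕ ρ l k i j := by
    intro F G
    conv_lhs => rw [expand_matrix φ hφ F, expand_matrix ϕ hϕ G]
    rw [sum_kron]
    simp only [kron_sum, sum_kron, Matrix.smul_kronecker, Matrix.kronecker_smul, hketk,
      Matrix.mul_sum, Matrix.mul_smul, Matrix.trace_sum, Matrix.trace_smul, smul_eq_mul,
      trace_mul_ketbra]
    rw [sum_swap (fun k j => ∑ i : Fin m, (star (ϕ j) ⬝ᵥ G.mulVec (ϕ i)) *
      ∑ l : Fin n, (star (φ k) ⬝ᵥ F.mulVec (φ l)) *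
        (star (vecTens (φ l) (ϕ i)) ⬝ᵥ ρ.mulVec (vecTens (φ k) (ϕ j))))]
    refine Finset.sum_congr rfl fun j _ => ?_
    rw [sum_swap (fun k i => (star (ϕ j) ⬝ᵥ G.mulVec (ϕ i)) *
      ∑ l : Fin n, (star (φ k) ⬝ᵥ F.mulVec (φ l)) *
        (star (vecTens (φ l) (ϕ i)) ⬝ᵥ ρ.mulVec (vecTens (φ k) (ϕ j))))]
    refine Finset.sum_congr rfl fun i _ => ?_
    rw [← Finset.mul_sum]
    congr 1
  have K3 : ∀ (F : Matrix (Fin n) (Fin n) ℂ) (G : Matrix (Fin m) (Fin m) ℂ),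
      (∑ i, ((lam i : ℝ) : ℂ) * (ρI i * F).trace * (ρII i * G).trace)
        = (ρ * (F ⊗ₖ G)).trace := by
    intro F G
    rw [hdec, Matrix.sum_mul, Matrix.trace_sum]
    refine Finset.sum_congr rfl fun i _ => ?_
    rw [Matrix.smul_mul, Matrix.trace_smul, ← Matrix.mul_kronecker_mul,
      Matrix.trace_kronecker, smul_eq_mul]
    ring
  have hcc : ∀ i j : Fin m, ((am i : ℝ) : ℂ) * ((b i : ℝ) : ℂ) * ((b j : ℝ) : ℂ)
      = ((Real.sqrt (am i / am j) : ℝ) : ℂ) := by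
    intro i j
    have hr : am i * b i * b j = Real.sqrt (am i / am j) := by
      rw [Real.sqrt_div (hapos i).le]
      have key : am i * b i = Real.sqrt (am i) := by
        simp only [hb]
        have hi : Real.sqrt (am i) ≠ 0 := (Real.sqrt_pos.mpr (hapos i)).ne'
        field_simp
        rw [Real.sq_sqrt (hapos i).le]
      rw [key]
      simp only [hb]
      rw [div_eq_mul_inv]
    rw [← hr]; push_cast; ring
  have hcF : ∀ (k0 l0 k l : Fin n), (star (φ k) ⬝ᵥ (ketbra (φ k0) (φ l0)).mulVec (φ l))
      = (if l0 = l then 1 else 0) * (if k = k0 then 1 else 0) := by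
    intro k0 l0 k l
    rw [ketbra_mulVec, dotProduct_smul, smul_eq_mul]
    have e1 : star (φ l0) ⬝ᵥ φ l = ∑ x, star (φ l0 x) * φ l x := rfl
    have e2 : star (φ k) ⬝ᵥ φ k0 = ∑ x, star (φ k x) * φ k0 x := rfl
    rw [e1, hφ l0 l, e2, hφ k k0]
  have hcG : ∀ (j0 i0 j i : Fin m), (star (ϕ j) ⬝ᵥ (ketbra (ϕ j0) (ϕ i0)).mulVec (ϕ i))
      = (if i0 = i then 1 else 0) * (if j = j0 then 1 else 0) := by
    intro j0 i0 j i
    rw [ketbra_mulVec, dotProduct_smul, smul_eq_mul]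
    have e1 : star (ϕ i0) ⬝ᵥ ϕ i = ∑ x, star (ϕ i0 x) * ϕ i x := rfl
    have e2 : star (ϕ j) ⬝ᵥ ϕ j0 = ∑ x, star (ϕ j x) * ϕ j0 x := rfl
    rw [e1, hϕ i0 i, e2, hϕ j j0]
  have collφ : ∀ (k0 l0 : Fin n) (Y : Fin n → Fin n → ℂ),
      (∑ k, ∑ l, ((if l0 = l then 1 else 0) * (if k = k0 then 1 else 0)) * Y k l) = Y k0 l0 := by
    intro k0 l0 Y
    simp [ite_mul, zero_mul, one_mul, Finset.sum_ite_eq, Finset.sum_ite_eq']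
  have collϕ : ∀ (j0 i0 : Fin m) (Y : Fin m → Fin m → ℂ),
      (∑ j, ∑ i, ((if i0 = i then 1 else 0) * (if j = j0 then 1 else 0)) * Y j i) = Y j0 i0 := by
    intro j0 i0 Y
    simp [ite_mul, zero_mul, one_mul, Finset.sum_ite_eq, Finset.sum_ite_eq']
  constructor
  · intro h k l j i
    have hh := h (ketbra (φ k) (φ l)) (ketbra (ϕ i) (ϕ j))
    rw [K1, K3, K2] at hh
    simp only [hcF, hcG] at hh
    rw [collϕ i j, collϕ i j] at hh
    simp only [collφ] at hh
    rw [hcc j i] at hh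
    rw [← hh]
    rw [Finset.mul_sum]
    refine Finset.sum_congr rfl fun p _ => ?_
    rw [Finset.mul_sum]
    refine Finset.sum_congr rfl fun q _ => ?_
    ring
  · intro h F G
    rw [K1, K3, K2]
    refine Finset.sum_congr rfl fun j _ => Finset.sum_congr rfl fun i _ => ?_
    congr 1
    have hrel : ∀ k l : Fin n, mel φ ϕ ρ l k i j
        = ((Real.sqrt (am i / am j) : ℝ) : ℂ) *
            ∑ r, ∑ q, mel φ ϕ s r k i q * mel φ ϕ s l r q j := by
      intro k l
      rw [h k l i j, Finset.mul_sum]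
      refine Finset.sum_congr rfl fun p _ => ?_
      rw [Finset.mul_sum]
      refine Finset.sum_congr rfl fun q _ => ?_
      ring
    simp only [hrel]
    rw [hcc i j]
    rw [show (∑ r : Fin n, ∑ k, ∑ l, (star (φ k) ⬝ᵥ F.mulVec (φ l)) *
          ∑ q, mel φ ϕ s r k i q * mel φ ϕ s l r q j)
        = ∑ k, ∑ l, (star (φ k) ⬝ᵥ F.mulVec (φ l)) *
            ∑ r, ∑ q, mel φ ϕ s r k i q * mel φ ϕ s l r q j from ?_]
    · rw [Finset.mul_sum]
      refine Finset.sum_congr rfl fun k _ => ?_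
      rw [Finset.mul_sum]
      refine Finset.sum_congr rfl fun l _ => ?_
      ring
    · rw [sum_swap (fun r k => ∑ l, (star (φ k) ⬝ᵥ F.mulVec (φ l)) *
        ∑ q, mel φ ϕ s r k i q * mel φ ϕ s l r q j)]
      refine Finset.sum_congr rfl fun k _ => ?_
      rw [sum_swap (fun r l => (star (φ k) ⬝ᵥ F.mulVec (φ l)) *
        ∑ q, mel φ ϕ s r k i q * mel φ ϕ s l r q j)]
      refine Finset.sum_congr rfl fun l _ => ?_
      rw [← Finset.mul_sum]
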